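/- Let E be a real normed vector space and let v : E → ℝ be of class C² (ContDiff ℝ 2 v). Define the circle-valued lift u : E → ℝ² by u(x) = (cos(v(x)), sin(v(x))). Then for every x ∈ E and every e, e' ∈ E, ‖(iteratedFDeriv ℝ 2 u x)(e, e')‖² = ((iteratedFDeriv ℝ 2 v x)(e, e'))² + ((fderiv ℝ v x)(e) · (fderiv ℝ v x)(e'))². -/

import Mathlib

/-- The circle-valued lift `u(x) = (cos (v x), sin (v x)) ∈ ℝ²` of `v : E → ℝ`,
where `ℝ² = EuclideanSpace ℝ (Fin 2)`. -/
noncomputable def circleLift {E : Type*} (v : E → ℝ) (x : E) : EuclideanSpace ℝ (Fin 2) :=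
  (WithLp.equiv 2 (Fin 2 → ℝ)).symm ![Real.cos (v x), Real.sin (v x)]

/-- Second derivative of a scalar composition `g ∘ v`. -/
lemma second_deriv_comp_aux {E : Type*} [NormedAddCommGroup E] [NormedSpace ℝ E]
    (v : E → ℝ) (hv : ContDiff ℝ 2 v) (g g' g'' : ℝ → ℝ)
    (hg : ∀ t, HasDerivAt g (g' t) t) (hg' : ∀ t, HasDerivAt g' (g'' t) t)
    (x : E) (e e' : E) :
    iteratedFDeriv ℝ 2 (fun y => g (v y)) x ![e, e'] =
      g'' (v x) * (fderiv ℝ v x e) * (fderiv ℝ v x e') +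
        g' (v x) * iteratedFDeriv ℝ 2 v x ![e, e'] := by
  have hdv : Differentiable ℝ v := hv.differentiable two_ne_zero
  have hfd : fderiv ℝ (fun y => g (v y)) = fun y => g' (v y) • fderiv ℝ v y := by
    funext y
    exact ((hg (v y)).comp_hasFDerivAt y (hdv y).hasFDerivAt).fderiv
  have hc : HasFDerivAt (fun y => g' (v y)) ((g'' (v x)) • fderiv ℝ v x) x :=
    (hg' (v x)).comp_hasFDerivAt x (hdv x).hasFDerivAt
  have hf' : ContDiff ℝ 1 (fderiv ℝ v) := hv.fderiv_right (by norm_num)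
  have hf : HasFDerivAt (fderiv ℝ v) (fderiv ℝ (fderiv ℝ v) x) x :=
    ((hf'.differentiable one_ne_zero) x).hasFDerivAt
  have h2 : HasFDerivAt (fun y => g' (v y) • fderiv ℝ v y)
      (g' (v x) • fderiv ℝ (fderiv ℝ v) x +
        ((g'' (v x)) • fderiv ℝ v x).smulRight (fderiv ℝ v x)) x := hc.smul hf
  rw [iteratedFDeriv_two_apply, iteratedFDeriv_two_apply, hfd, h2.fderiv]
  simp only [Matrix.cons_val_zero, Matrix.cons_val_one, Matrix.head_cons,
    ContinuousLinearMap.add_apply, ContinuousLinearMap.coe_smul', Pi.smul_apply,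
    ContinuousLinearMap.smulRight_apply, ContinuousLinearMap.smul_apply, smul_eq_mul]
  ring

theorem circleLift_iteratedFDeriv_two_sq {E : Type*} [NormedAddCommGroup E] [NormedSpace ℝ E]
    (v : E → ℝ) (hv : ContDiff ℝ 2 v) (x : E) (e e' : E) :
    ‖(iteratedFDeriv ℝ 2 (circleLift v) x) ![e, e']‖ ^ 2 =
      ((iteratedFDeriv ℝ 2 v x) ![e, e']) ^ 2 +
        ((fderiv ℝ v x e) * (fderiv ℝ v x e')) ^ 2 := by
  set f : E → (Fin 2 → ℝ) := fun y => ![Real.cos (v y), Real.sin (v y)] with hfdef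
  have hcos : ContDiff ℝ 2 (fun y => Real.cos (v y)) := Real.contDiff_cos.comp hv
  have hsin : ContDiff ℝ 2 (fun y => Real.sin (v y)) := Real.contDiff_sin.comp hv
  have hf : ContDiff ℝ 2 f := by
    rw [contDiff_pi]
    intro i
    fin_cases i
    · exact hcos
    · exact hsin
  -- circleLift v = equiv.symm ∘ f
  have hcl : circleLift v = ((EuclideanSpace.equiv (Fin 2) ℝ).symm :
      (Fin 2 → ℝ) →L[ℝ] EuclideanSpace ℝ (Fin 2)) ∘ f := rfl
  rw [hcl, ContinuousLinearMap.iteratedFDeriv_comp_left _ (hf.contDiffAt (x := x)) le_rfl]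
  -- components of D²f
  have hcomp : ∀ i : Fin 2, iteratedFDeriv ℝ 2 f x ![e, e'] i =
      iteratedFDeriv ℝ 2 (fun y => f y i) x ![e, e'] := by
    intro i
    have := ContinuousLinearMap.iteratedFDeriv_comp_left
      (ContinuousLinearMap.proj (R := ℝ) (φ := fun _ : Fin 2 => ℝ) i) (hf.contDiffAt (x := x)) (le_refl 2)
    have h2 : (fun y => f y i) = (ContinuousLinearMap.proj (R := ℝ)
        (φ := fun _ : Fin 2 => ℝ) i) ∘ f := rfl
    rw [h2, this]
    rfl
  have h0 : iteratedFDeriv ℝ 2 f x ![e, e'] 0 =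
      iteratedFDeriv ℝ 2 (fun y => Real.cos (v y)) x ![e, e'] := by
    rw [hcomp 0]; congr 1
  have h1 : iteratedFDeriv ℝ 2 f x ![e, e'] 1 =
      iteratedFDeriv ℝ 2 (fun y => Real.sin (v y)) x ![e, e'] := by
    rw [hcomp 1]; congr 1
  have hcosD := second_deriv_comp_aux v hv Real.cos (fun t => -Real.sin t)
    (fun t => -Real.cos t) (fun t => Real.hasDerivAt_cos t)
    (fun t => (Real.hasDerivAt_sin t).neg) x e e'
  have hsinD := second_deriv_comp_aux v hv Real.sin Real.cos (fun t => -Real.sin t)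
    (fun t => Real.hasDerivAt_sin t) (fun t => Real.hasDerivAt_cos t) x e e'
  have hnorm : ‖(((EuclideanSpace.equiv (Fin 2) ℝ).symm :
      (Fin 2 → ℝ) →L[ℝ] EuclideanSpace ℝ (Fin 2)).compContinuousMultilinearMap
      (iteratedFDeriv ℝ 2 f x)) ![e, e']‖ ^ 2 =
      (iteratedFDeriv ℝ 2 f x ![e, e'] 0) ^ 2 + (iteratedFDeriv ℝ 2 f x ![e, e'] 1) ^ 2 := by
    rw [ContinuousLinearMap.compContinuousMultilinearMap_coe]
    simp only [Function.comp_apply]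
    rw [EuclideanSpace.norm_eq]
    rw [Real.sq_sqrt (by positivity)]
    simp [Fin.sum_univ_two, sq_abs]

  rw [hnorm, h0, h1, hcosD, hsinD]
  have hpyth := Real.sin_sq_add_cos_sq (v x)
  nlinarith [Real.sin_sq_add_cos_sq (v x), sq_nonneg (fderiv ℝ v x e)]
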